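/- For positive integers l and n, (1/lcm(l,n)) · ∑_{k=1}^{lcm(l,n)} C_l(k) C_n(k) equals φ(n) if l = n and 0 otherwise, where C_m(k) is the Ramanujan sum and φ is Euler's totient function. -/

import Mathlib

open scoped BigOperators

lemma rootSum (L : ℕ) (hL : 0 < L) (m : ℕ) :
    ∑ k ∈ Finset.Icc 1 L, Complex.exp (2 * Real.pi * Complex.I * m * k / L) =
      if L ∣ m then (L : ℂ) else 0 := by
  have hL0 : (L : ℂ) ≠ 0 := Nat.cast_ne_zero.mpr hL.ne'
  set z : ℂ := Complex.exp (2 * Real.pi * Complex.I * m / L) with hz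
  have hterm : ∀ k : ℕ, Complex.exp (2 * Real.pi * Complex.I * m * k / L) = z ^ k := by
    intro k
    rw [hz, ← Complex.exp_nat_mul]
    congr 1
    field_simp
  have hzL : z ^ L = 1 := by
    rw [hz, ← Complex.exp_nat_mul]
    have : (L : ℂ) * (2 * Real.pi * Complex.I * m / L) = m * (2 * Real.pi * Complex.I) := by
      field_simp
    rw [this, Complex.exp_nat_mul_two_pi_mul_I]
  have h2 : (2 * Real.pi * Complex.I : ℂ) ≠ 0 := by
    simp [Real.pi_ne_zero, Complex.I_ne_zero]
  have hz1 : z = 1 ↔ L ∣ m := by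
    rw [hz, Complex.exp_eq_one_iff]
    constructor
    · rintro ⟨c, hc⟩
      have hmc : (m : ℂ) = c * L := by
        have h3 : 2 * Real.pi * Complex.I * m / L = 2 * Real.pi * Complex.I * (m / L) := by ring
        rw [h3] at hc
        have h4 : (c : ℂ) * (2 * Real.pi * Complex.I) = 2 * Real.pi * Complex.I * c := by ring
        rw [h4] at hc
        have h5 : (m : ℂ) / L = c := mul_left_cancel₀ h2 hc
        field_simp at h5
        linear_combination h5
      have : (m : ℤ) = c * L := by exact_mod_cast hmc
      have : (L : ℤ) ∣ (m : ℤ) := ⟨c, by linarith⟩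
      exact_mod_cast this
    · rintro ⟨c, rfl⟩
      exact ⟨c, by field_simp; push_cast; ring⟩
  simp only [hterm]
  rw [← Finset.Ico_add_one_right_eq_Icc, Finset.sum_Ico_eq_sum_range]
  by_cases h : z = 1
  · simp [h, hz1.mp h]
  · rw [if_neg (fun hd => h (hz1.mpr hd))]
    have he : ∀ k, z ^ (1 + k) = z * z ^ k := fun k => by rw [pow_add, pow_one]
    simp only [he, ← Finset.mul_sum]
    simp only [Nat.add_sub_cancel]
    rw [geom_sum_eq h, hzL]
    simp

lemma cardSn (n : ℕ) (hn : 0 < n) :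
    ((Finset.Icc 1 n).filter (fun j => Nat.gcd j n = 1)).card = Nat.totient n := by
  rw [Nat.totient_eq_card_coprime]
  apply Finset.card_bij (fun j _ => j % n)
  · intro j hj
    simp only [Finset.mem_filter, Finset.mem_Icc] at hj
    simp only [Finset.mem_filter, Finset.mem_range]
    refine ⟨Nat.mod_lt j hn, ?_⟩
    have : Nat.gcd n j = Nat.gcd (j % n) n := Nat.gcd_rec n j
    rw [Nat.Coprime, Nat.gcd_comm] at *
    rw [Nat.gcd_comm] at this
    omega
  · intro j₁ h₁ j₂ h₂ hmod
    simp only [Finset.mem_filter, Finset.mem_Icc] at h₁ h₂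
    rcases eq_or_lt_of_le h₁.1.2 with rfl | hlt₁
    · rcases eq_or_lt_of_le h₂.1.2 with rfl | hlt₂
      · rfl
      · rw [Nat.mod_self, Nat.mod_eq_of_lt hlt₂] at hmod; omega
    · rcases eq_or_lt_of_le h₂.1.2 with rfl | hlt₂
      · rw [Nat.mod_self, Nat.mod_eq_of_lt hlt₁] at hmod; omega
      · rwa [Nat.mod_eq_of_lt hlt₁, Nat.mod_eq_of_lt hlt₂] at hmod
  · intro x hx
    simp only [Finset.mem_filter, Finset.mem_range] at hx
    rcases Nat.eq_zero_or_pos x with rfl | hx1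
    · have hn1 : n = 1 := by
        have := hx.2; rwa [Nat.coprime_zero_right] at this
      refine ⟨n, ?_, ?_⟩
      · simp [Finset.mem_filter, Finset.mem_Icc, hn, hn1]
      · simp
    · refine ⟨x, ?_, Nat.mod_eq_of_lt hx.1⟩
      simp only [Finset.mem_filter, Finset.mem_Icc]
      exact ⟨⟨hx1, hx.1.le⟩, by have := hx.2; rwa [Nat.Coprime, Nat.gcd_comm] at this⟩

lemma innerSum (n : ℕ) (hn : 0 < n) (j : ℕ) (hj1 : 1 ≤ j) (hjn : j ≤ n)
    (hjc : Nat.gcd j n = 1) :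
    ∑ i ∈ (Finset.Icc 1 n).filter (fun i => Nat.gcd i n = 1),
      (if n ∣ j + i then (n : ℂ) else 0) = n := by
  set i₀ := n - j % n with hi₀
  have hjm : j % n < n := Nat.mod_lt j hn
  have hdvd₀ : n ∣ j + i₀ := by
    refine ⟨j / n + 1, ?_⟩
    have h1 : n * (j / n) = j - j % n := by
      have := Nat.mod_add_div j n; omega
    have h2 : n * (j / n + 1) = n * (j / n) + n := by ring
    have h3 : j % n ≤ j := Nat.mod_le j n
    omega
  have hmem₀ : i₀ ∈ (Finset.Icc 1 n).filter (fun i => Nat.gcd i n = 1) := by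
    simp only [Finset.mem_filter, Finset.mem_Icc]
    refine ⟨⟨by omega, by omega⟩, ?_⟩
    rcases Nat.eq_zero_or_pos (j % n) with h0 | hpos
    · have hnj : n ∣ j := Nat.dvd_of_mod_eq_zero h0
      have hn1 : n = 1 := by
        have h4 := Nat.dvd_gcd hnj (dvd_refl n)
        rw [hjc] at h4
        exact Nat.dvd_one.mp h4
      simp [hi₀, hn1]
    · have h5 := Nat.gcd_self_sub_left (le_of_lt hjm)
      rw [hi₀, h5]
      have h6 : Nat.gcd (j % n) n = Nat.gcd n j := (Nat.gcd_rec n j).symm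
      rw [h6, Nat.gcd_comm, hjc]
  rw [Finset.sum_eq_single_of_mem i₀ hmem₀]
  · rw [if_pos hdvd₀]
  · intro i hi hne
    rw [if_neg]
    intro hdvd
    apply hne
    simp only [Finset.mem_filter, Finset.mem_Icc] at hi
    obtain ⟨c, hc⟩ := hdvd
    obtain ⟨c', hc'⟩ := hdvd₀
    have hcz : (j : ℤ) + i = (n : ℤ) * c := by exact_mod_cast hc
    have hc'z : (j : ℤ) + i₀ = (n : ℤ) * c' := by exact_mod_cast hc'
    have hz : (i : ℤ) - i₀ = n * ((c : ℤ) - c') := by linear_combination hcz - hc'z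
    have habs : |(i : ℤ) - i₀| < n := by
      rw [abs_lt]
      constructor <;> omega
    have := Int.eq_zero_of_abs_lt_dvd ⟨(c : ℤ) - c', hz⟩ habs
    omega

/-- The Ramanujan sum `C_m(k) = ∑_{1 ≤ j ≤ m, gcd(j,m)=1} exp(2πi j k / m)`. -/
noncomputable def ramanujanC (m : ℕ) (k : ℕ) : ℂ :=
  ∑ j ∈ (Finset.Icc 1 m).filter (fun j => Nat.gcd j m = 1),
    Complex.exp (2 * Real.pi * Complex.I * j * k / m)

/-- Orthogonality of Ramanujan sums: for positive integers `l, n`,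
`(1/lcm(l,n)) ∑_{k=1}^{lcm(l,n)} C_l(k) C_n(k)` equals `φ(n)` if `l = n`
and `0` otherwise. -/
theorem ramanujan_orthogonality (l n : ℕ) (hl : 0 < l) (hn : 0 < n) :
    (1 / (Nat.lcm l n : ℂ)) *
        ∑ k ∈ Finset.Icc 1 (Nat.lcm l n), ramanujanC l k * ramanujanC n k =
      if l = n then (Nat.totient n : ℂ) else 0 := by
  set L := Nat.lcm l n with hLdef
  have hL : 0 < L := Nat.pos_of_ne_zero (Nat.lcm_ne_zero hl.ne' hn.ne')
  set a := L / l with ha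
  set b := L / n with hb
  have hla : l * a = L := Nat.mul_div_cancel' (Nat.dvd_lcm_left l n)
  have hnb : n * b = L := Nat.mul_div_cancel' (Nat.dvd_lcm_right l n)
  have hl0 : (l : ℂ) ≠ 0 := Nat.cast_ne_zero.mpr hl.ne'
  have hn0 : (n : ℂ) ≠ 0 := Nat.cast_ne_zero.mpr hn.ne'
  have hL0 : (L : ℂ) ≠ 0 := Nat.cast_ne_zero.mpr hL.ne'
  have hla' : (l : ℂ) * a = L := by exact_mod_cast congrArg (Nat.cast : ℕ → ℂ) hla
  have hnb' : (n : ℂ) * b = L := by exact_mod_cast congrArg (Nat.cast : ℕ → ℂ) hnb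
  set Sl := (Finset.Icc 1 l).filter (fun j => Nat.gcd j l = 1) with hSl
  set Sn := (Finset.Icc 1 n).filter (fun j => Nat.gcd j n = 1) with hSn
  have key : ∑ k ∈ Finset.Icc 1 L, ramanujanC l k * ramanujanC n k
      = ∑ j ∈ Sl, ∑ i ∈ Sn, (if L ∣ (j * a + i * b) then (L : ℂ) else 0) := by
    have step1 : ∀ k, ramanujanC l k * ramanujanC n k =
        ∑ j ∈ Sl, ∑ i ∈ Sn,
          Complex.exp (2 * Real.pi * Complex.I * ((j * a + i * b : ℕ) : ℂ) * k / L) := by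
      intro k
      rw [ramanujanC, ramanujanC, Finset.sum_mul_sum]
      refine Finset.sum_congr rfl fun j _ => Finset.sum_congr rfl fun i _ => ?_
      rw [← Complex.exp_add]
      congr 1
      push_cast
      field_simp
      linear_combination (-(j * k * n : ℂ)) * hla' +
        (-(i * k * l : ℂ)) * hnb'
    simp only [step1]
    rw [Finset.sum_comm]
    refine Finset.sum_congr rfl fun j _ => ?_
    rw [Finset.sum_comm]
    refine Finset.sum_congr rfl fun i _ => ?_
    exact rootSum L hL (j * a + i * b)
  rw [key]
  by_cases hln : l = n
  · subst hln
    have hLl : L = l := Nat.lcm_self l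
    have ha1 : a = 1 := by
      have : l * a = l * 1 := by rw [hla, hLl, mul_one]
      exact Nat.eq_of_mul_eq_mul_left hl this
    have hb1 : b = 1 := ha1
    rw [if_pos rfl]
    have hinner : ∀ j ∈ Sl, ∑ i ∈ Sn, (if L ∣ (j * a + i * b) then (L : ℂ) else 0)
        = (l : ℂ) := by
      intro j hj
      simp only [hSl, Finset.mem_filter, Finset.mem_Icc] at hj
      have := innerSum l hl j hj.1.1 hj.1.2 hj.2
      simpa [ha1, hb1, hLl] using this
    rw [Finset.sum_congr rfl hinner, Finset.sum_const, cardSn l hl]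
    rw [hLl]
    field_simp
    rw [nsmul_eq_mul, mul_comm]
  · rw [if_neg hln]
    have hzero : ∀ j ∈ Sl, ∀ i ∈ Sn, ¬ (L ∣ (j * a + i * b)) := by
      intro j hj i hi hdvd
      simp only [hSl, Finset.mem_filter, Finset.mem_Icc] at hj
      simp only [hSn, Finset.mem_filter, Finset.mem_Icc] at hi
      set g := Nat.gcd l n with hg
      have hg0 : 0 < g := Nat.gcd_pos_of_pos_left n hl
      have hgl : L * g = l * n := by
        rw [hLdef, hg]
        rw [mul_comm]
        exact Nat.gcd_mul_lcm l n
      have hag : a * g = n := by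
        have h1 : l * (a * g) = l * n := by rw [← mul_assoc, hla, hgl]
        exact Nat.eq_of_mul_eq_mul_left hl h1
      have hbg : b * g = l := by
        have h1 : n * (b * g) = n * l := by rw [← mul_assoc, hnb, hgl, mul_comm]
        exact Nat.eq_of_mul_eq_mul_left hn h1
      have hab : Nat.Coprime b a := by
        have hcop := Nat.coprime_div_gcd_div_gcd (m := l) (n := n) hg0
        have hbd : l / g = b := Nat.div_eq_of_eq_mul_left hg0 hbg.symm
        have had : n / g = a := Nat.div_eq_of_eq_mul_left hg0 hag.symm
        rwa [hbd, had] at hcop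
      have haL : a ∣ L := Dvd.intro l (by rw [← hla, mul_comm])
      have hbL : b ∣ L := Dvd.intro n (by rw [← hnb, mul_comm])
      have hai : a ∣ i * b := by
        have h1 : a ∣ j * a + i * b := dvd_trans haL hdvd
        exact (Nat.dvd_add_right (dvd_mul_left a j)).mp h1
      have hai' : a ∣ i := (Nat.Coprime.dvd_of_dvd_mul_right hab.symm) hai
      have han : a ∣ n := Dvd.intro g (by rw [← hag, mul_comm])
      have ha1 : a = 1 := by
        have h2 := Nat.dvd_gcd hai' han
        rw [hi.2] at h2
        exact Nat.dvd_one.mp h2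
      have hbj : b ∣ j * a := by
        have h1 : b ∣ j * a + i * b := dvd_trans hbL hdvd
        exact (Nat.dvd_add_left (dvd_mul_left b i)).mp h1
      have hbj' : b ∣ j := (Nat.Coprime.dvd_of_dvd_mul_right hab) hbj
      have hbl : b ∣ l := Dvd.intro g (by rw [← hbg, mul_comm])
      have hb1 : b = 1 := by
        have h2 := Nat.dvd_gcd hbj' hbl
        rw [hj.2] at h2
        exact Nat.dvd_one.mp h2
      rw [ha1, one_mul] at hag
      rw [hb1, one_mul] at hbg
      exact hln (by omega)
    have hzsum : ∀ j ∈ Sl, ∑ i ∈ Sn, (if L ∣ (j * a + i * b) then (L : ℂ) else 0) = 0 := by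
      intro j hj
      apply Finset.sum_eq_zero
      intro i hi
      rw [if_neg (hzero j hj i hi)]
    rw [Finset.sum_congr rfl hzsum, Finset.sum_const, smul_zero, mul_zero]
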